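/- Let z∈ℂ with Re z ≥ 0 and z≠0, and let R>0. Then the improper integral ∫_R^{∞} exp(−zk²)·k^{−1} dk (understood as lim_{S→∞}∫_R^S) converges, and | ∫_R^{∞} exp(−zk²)·k^{−1} dk | ≤ exp(−(Re z)·R²) / ( |z|·R² ). -/

import Mathlib

open Complex MeasureTheory Filter Topology Set

noncomputable def F18 (z : ℂ) (k : ℝ) : ℂ :=
  (-(2*z))⁻¹ * ((k:ℂ)^2)⁻¹ * Complex.exp (-z * (k:ℂ)^2)

lemma hasDerivAt_F18 (z : ℂ) (hz0 : z ≠ 0) (k : ℝ) (hk : k ≠ 0) :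
    HasDerivAt (F18 z)
      (Complex.exp (-z * (k:ℂ)^2) * (k:ℂ)⁻¹
        + z⁻¹ * ((k:ℂ)^3)⁻¹ * Complex.exp (-z*(k:ℂ)^2)) k := by
  have hkc : (k:ℂ) ≠ 0 := Complex.ofReal_ne_zero.mpr hk
  have h1 : HasDerivAt (fun w : ℂ => (-(2*z))⁻¹ * (w^2)⁻¹ * Complex.exp (-z * w^2))
      (Complex.exp (-z * (k:ℂ)^2) * (k:ℂ)⁻¹
        + z⁻¹ * ((k:ℂ)^3)⁻¹ * Complex.exp (-z*(k:ℂ)^2)) (k:ℂ) := by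
    have hp : HasDerivAt (fun w : ℂ => w^2) (2*(k:ℂ)) (k:ℂ) := by
      simpa using hasDerivAt_pow 2 (k:ℂ)
    have hinv : HasDerivAt (fun w : ℂ => (w^2)⁻¹) (-(2*(k:ℂ)) / ((k:ℂ)^2)^2) (k:ℂ) :=
      hp.inv (pow_ne_zero 2 hkc)
    have hexp : HasDerivAt (fun w : ℂ => Complex.exp (-z * w^2))
        (Complex.exp (-z*(k:ℂ)^2) * (-z * (2*(k:ℂ)))) (k:ℂ) := by
      have := (hp.const_mul (-z)).cexp
      simpa [mul_comm, mul_assoc] using this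
    have := (hinv.const_mul ((-(2*z))⁻¹)).mul hexp
    refine this.congr_deriv ?_
    field_simp
    ring
  exact h1.comp_ofReal

set_option maxHeartbeats 1000000 in
/-- for `z∈ℂ` with `Re z ≥ 0`, `z≠0`, and `R>0`, the improper integral
`∫_R^∞ exp(−zk²)·k⁻¹ dk = lim_{S→∞}∫_R^S` converges and is bounded in absolute value by
`exp(−(Re z)R²)/(|z|R²)`. -/
theorem stmt18 (z : ℂ) (hz : 0 ≤ z.re) (hz0 : z ≠ 0) (R : ℝ) (hR : 0 < R) :
    ∃ A : ℂ,
      Tendsto (fun S : ℝ => ∫ k in R..S, Complex.exp (-z * (k : ℂ) ^ 2) * (k : ℂ)⁻¹)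
        atTop (𝓝 A) ∧
      ‖A‖ ≤ Real.exp (-z.re * R ^ 2) / (‖z‖ * R ^ 2) := by
  have hzn : (0:ℝ) < ‖z‖ := norm_pos_iff.mpr hz0
  set c : ℝ := Real.exp (-z.re * R ^ 2) with hc
  have hcpos : 0 < c := Real.exp_pos _
  set h : ℝ → ℂ := fun k => z⁻¹ * ((k:ℂ)^3)⁻¹ * Complex.exp (-z*(k:ℂ)^2) with hh
  -- norm of exp
  have hexpnorm : ∀ k : ℝ, ‖Complex.exp (-z*(k:ℂ)^2)‖ = Real.exp (-z.re * k^2) := by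
    intro k
    rw [Complex.norm_exp]
    congr 1
    have : -z*(k:ℂ)^2 = ((k^2:ℝ):ℂ) * (-z) := by push_cast; ring
    rw [this, Complex.re_ofReal_mul]
    simp [mul_comm]
  have hexple : ∀ k : ℝ, R ≤ k → Real.exp (-z.re * k^2) ≤ c := by
    intro k hk
    apply Real.exp_le_exp.mpr
    have : R^2 ≤ k^2 := by nlinarith
    nlinarith
  -- norm bound for h
  have hnorm : ∀ k : ℝ, R ≤ k → ‖h k‖ ≤ (c/‖z‖) * (k^3)⁻¹ := by
    intro k hk
    have hkpos : 0 < k := lt_of_lt_of_le hR hk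
    have : ‖h k‖ = ‖z‖⁻¹ * (k^3)⁻¹ * Real.exp (-z.re * k^2) := by
      rw [hh]
      simp only [norm_mul, norm_inv, norm_pow, Complex.norm_real, hexpnorm]
      rw [Real.norm_eq_abs, abs_of_pos hkpos]
    rw [this]
    have h3 : (0:ℝ) < (k^3)⁻¹ := by positivity
    calc ‖z‖⁻¹ * (k^3)⁻¹ * Real.exp (-z.re * k^2) ≤ ‖z‖⁻¹ * (k^3)⁻¹ * c := by
          apply mul_le_mul_of_nonneg_left (hexple k hk) (by positivity)
      _ = (c/‖z‖) * (k^3)⁻¹ := by ring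
  -- continuity of h on sets avoiding 0
  have hcont : ∀ s : Set ℝ, (∀ x ∈ s, x ≠ 0) → ContinuousOn h s := by
    intro s hs
    apply ContinuousOn.mul
    · apply ContinuousOn.mul continuousOn_const
      apply ContinuousOn.inv₀
      · exact (Complex.continuous_ofReal.pow 3).continuousOn
      · intro x hx
        exact pow_ne_zero 3 (Complex.ofReal_ne_zero.mpr (hs x hx))
    · exact (Complex.continuous_exp.comp (continuous_const.mul ((Complex.continuous_ofReal.pow 2)))).continuousOn
  have hcont2 : ∀ s : Set ℝ, (∀ x ∈ s, x ≠ 0) →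
      ContinuousOn (fun k : ℝ => Complex.exp (-z * (k:ℂ)^2) * (k:ℂ)⁻¹) s := by
    intro s hs
    apply ContinuousOn.mul
    · exact (Complex.continuous_exp.comp (continuous_const.mul ((Complex.continuous_ofReal.pow 2)))).continuousOn
    · apply ContinuousOn.inv₀
      · exact Complex.continuous_ofReal.continuousOn
      · intro x hx; exact Complex.ofReal_ne_zero.mpr (hs x hx)
  -- integrability of h on Ioi R
  have hgint : IntegrableOn (fun k : ℝ => (c/‖z‖) * k ^ (-3:ℝ)) (Ioi R) := by
    exact (integrableOn_Ioi_rpow_of_lt (by norm_num) hR).const_mul _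
  have hint : IntegrableOn h (Ioi R) := by
    apply Integrable.mono' hgint
    · exact (hcont (Ioi R) (fun x hx => ne_of_gt (lt_trans hR hx))).aestronglyMeasurable measurableSet_Ioi
    · filter_upwards [ae_restrict_mem measurableSet_Ioi] with k hk
      have hkpos : 0 < k := lt_trans hR hk
      have : k ^ (-3:ℝ) = (k^3)⁻¹ := by
        rw [show (-3:ℝ) = ((-3:ℤ):ℝ) by norm_num, Real.rpow_intCast, zpow_neg]
        norm_cast
      rw [this]
      exact hnorm k (le_of_lt hk)
  set I : ℂ := ∫ k in Ioi R, h k with hI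
  -- bound on I
  have hIbound : ‖I‖ ≤ c / (2 * ‖z‖ * R^2) := by
    have h1 : ‖I‖ ≤ ∫ k in Ioi R, (c/‖z‖) * k ^ (-3:ℝ) := by
      apply norm_integral_le_of_norm_le hgint
      filter_upwards [ae_restrict_mem measurableSet_Ioi] with k hk
      have hkpos : 0 < k := lt_trans hR hk
      have : k ^ (-3:ℝ) = (k^3)⁻¹ := by
        rw [show (-3:ℝ) = ((-3:ℤ):ℝ) by norm_num, Real.rpow_intCast, zpow_neg]
        norm_cast
      rw [this]
      exact hnorm k (le_of_lt hk)
    have h2 : ∫ k in Ioi R, (c/‖z‖) * k ^ (-3:ℝ) = (c/‖z‖) * (R^2)⁻¹ / 2 := by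
      rw [integral_const_mul, integral_Ioi_rpow_of_lt (by norm_num) hR]
      rw [show (-3:ℝ) + 1 = -2 by norm_num]
      rw [Real.rpow_neg hR.le, show ((2:ℝ):ℝ) = ((2:ℕ):ℝ) by norm_num, Real.rpow_natCast]
      ring
    rw [h2] at h1
    calc ‖I‖ ≤ (c/‖z‖) * (R^2)⁻¹ / 2 := h1
      _ = c / (2 * ‖z‖ * R^2) := by field_simp
  -- value of F18 at R
  have h2c : ‖(2:ℂ)‖ = 2 := by norm_num
  have hFR : ‖F18 z R‖ = c / (2 * ‖z‖ * R^2) := by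
    unfold F18
    simp only [norm_mul, norm_inv, norm_neg, norm_pow, Complex.norm_real, hexpnorm,
      Real.norm_eq_abs, abs_of_pos hR, h2c]
    rw [hc]
    field_simp
    try ring
  -- F18 z S → 0
  have hF0 : Tendsto (fun S : ℝ => F18 z S) atTop (𝓝 0) := by
    apply squeeze_zero_norm' (a := fun S : ℝ => (2*‖z‖)⁻¹ * (S^2)⁻¹)
    · filter_upwards [eventually_ge_atTop R] with S hS
      have hSpos : 0 < S := lt_of_lt_of_le hR hS
      unfold F18
      simp only [norm_mul, norm_inv, norm_neg, norm_pow, Complex.norm_real, hexpnorm,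
        Real.norm_eq_abs, abs_of_pos hSpos, h2c]
      calc (2 * ‖z‖)⁻¹ * ((S^2)⁻¹) * Real.exp (-z.re * S^2)
          ≤ (2 * ‖z‖)⁻¹ * ((S^2)⁻¹) * 1 := by
            apply mul_le_mul_of_nonneg_left _ (by positivity)
            apply Real.exp_le_one_iff.mpr
            nlinarith
        _ = (2 * ‖z‖)⁻¹ * (S^2)⁻¹ := by ring
    · rw [show (0:ℝ) = (2*‖z‖)⁻¹ * 0 by ring]
      apply Tendsto.const_mul
      exact (tendsto_pow_atTop (by norm_num : 2 ≠ 0)).inv_tendsto_atTop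
  -- the tail integral tends to I
  have hItend : Tendsto (fun S : ℝ => ∫ k in R..S, h k) atTop (𝓝 I) :=
    intervalIntegral_tendsto_integral_Ioi R hint tendsto_id
  -- the main identity for S ≥ R
  have hmain : ∀ᶠ S in atTop, (∫ k in R..S, Complex.exp (-z * (k : ℂ) ^ 2) * (k : ℂ)⁻¹)
      = F18 z S - F18 z R - ∫ k in R..S, h k := by
    filter_upwards [eventually_ge_atTop R] with S hS
    have huicc : Set.uIcc R S = Set.Icc R S := Set.uIcc_of_le hS
    have hne : ∀ x ∈ Set.uIcc R S, x ≠ 0 := by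
      intro x hx
      rw [huicc] at hx
      exact ne_of_gt (lt_of_lt_of_le hR hx.1)
    have hderiv : ∀ x ∈ Set.uIcc R S, HasDerivAt (F18 z)
        (Complex.exp (-z * (x:ℂ)^2) * (x:ℂ)⁻¹ + h x) x := by
      intro x hx
      exact hasDerivAt_F18 z hz0 x (hne x hx)
    have hii1 : IntervalIntegrable (fun k : ℝ => Complex.exp (-z * (k:ℂ)^2) * (k:ℂ)⁻¹) volume R S :=
      (hcont2 _ hne).intervalIntegrable
    have hii2 : IntervalIntegrable h volume R S := (hcont _ hne).intervalIntegrable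
    have := intervalIntegral.integral_eq_sub_of_hasDerivAt hderiv (hii1.add hii2)
    rw [intervalIntegral.integral_add hii1 hii2] at this
    linear_combination this
  refine ⟨-F18 z R - I, ?_, ?_⟩
  · have hmain' : (fun S : ℝ => F18 z S - F18 z R - ∫ k in R..S, h k) =ᶠ[atTop]
        (fun S : ℝ => ∫ k in R..S, Complex.exp (-z * (k : ℂ) ^ 2) * (k : ℂ)⁻¹) := by
      filter_upwards [hmain] with S hS
      exact hS.symm
    apply Tendsto.congr' hmain'
    have : Tendsto (fun S : ℝ => F18 z S - F18 z R - ∫ k in R..S, h k) atTop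
        (𝓝 (0 - F18 z R - I)) := (hF0.sub tendsto_const_nhds).sub hItend
    simpa using this
  · calc ‖-F18 z R - I‖ ≤ ‖F18 z R‖ + ‖I‖ := by
          rw [show -F18 z R - I = -(F18 z R + I) by ring]
          rw [norm_neg]
          exact norm_add_le _ _
      _ ≤ c / (2 * ‖z‖ * R^2) + c / (2 * ‖z‖ * R^2) := by
          rw [hFR]; linarith [hIbound]
      _ = c / (‖z‖ * R^2) := by field_simp; ring
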